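/- Let q, k, δ, κ, r be positive integers with q ≥ 2, k ≥ 1, δ ≥ 1, and 1 ≤ κ ≤ r, and let b = (k−1) − (⌈k/κ⌉ − 1)·κ (so 0 ≤ b < κ). Then, as integers, ⌈k/κ⌉·G_q(κ,δ) − G_q(κ−b,δ) ≥ (k−1) + (⌈k/r⌉ − 1)·(δ−1). (Consequently, for locally repairable codes the Singleton-type bound d ≤ n − ⌈k/κ⌉·G_q(κ,δ) + G_q(κ−b,δ) is at least as strong as the bound d ≤ n − k + 1 − (⌈k/r⌉ − 1)(δ−1).) -/

import Mathlib

open Finset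

/-- Griesmer function `G_q(k,d) = Σ_{i=0}^{k-1} ⌈d / q^i⌉`. -/
def Griesmer (q k d : ℕ) : ℕ := ∑ i ∈ Finset.range k, (d + q ^ i - 1) / q ^ i

lemma Griesmer_mono_aux {q d : ℕ} (hq : 1 ≤ q) (hd : 1 ≤ d) {m n : ℕ} (hmn : m ≤ n) :
    Griesmer q m d + (n - m) ≤ Griesmer q n d := by
  unfold Griesmer
  rw [Finset.range_eq_Ico, Finset.range_eq_Ico, ← Finset.sum_Ico_consecutive _ (Nat.zero_le m) hmn]
  have h1 : (n - m) ≤ ∑ i ∈ Finset.Ico m n, (d + q ^ i - 1) / q ^ i := by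
    calc n - m = (Finset.Ico m n).card • 1 := by simp [Nat.card_Ico]
    _ ≤ _ := Finset.card_nsmul_le_sum _ _ _ (by
        intro i _
        have hqi : 1 ≤ q ^ i := Nat.one_le_pow _ _ hq
        rw [Nat.le_div_iff_mul_le (by omega)]
        omega)
  omega

lemma Griesmer_one (q d : ℕ) : Griesmer q 1 d = d := by
  simp [Griesmer]

/-- The new Singleton-type bound is at least as strong as the Prakash et al. bound. -/
theorem stmt_5 {q k δ κ r : ℕ}
    (hq : 2 ≤ q) (hk : 1 ≤ k) (hδ : 1 ≤ δ) (hκ : 1 ≤ κ) (hκr : κ ≤ r) :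
    ((k : ℤ) - 1) + (((k + r - 1) / r : ℕ) - 1) * ((δ : ℤ) - 1) ≤
      ((k + κ - 1) / κ : ℕ) * (Griesmer q κ δ : ℤ)
        - (Griesmer q (κ - ((k - 1) - ((k + κ - 1) / κ - 1) * κ)) δ : ℤ) := by
  have hr : 1 ≤ r := le_trans hκ hκr
  have hκ' : (k + κ - 1) / κ = (k - 1) / κ + 1 := by
    rw [show k + κ - 1 = (k - 1) + κ by omega, Nat.add_div_right _ (by omega)]
  have hr' : (k + r - 1) / r = (k - 1) / r + 1 := by
    rw [show k + r - 1 = (k - 1) + r by omega, Nat.add_div_right _ (by omega)]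
  have hb : (k - 1) - ((k + κ - 1) / κ - 1) * κ = (k - 1) % κ := by
    rw [hκ', Nat.add_sub_cancel]
    exact Nat.sub_eq_of_eq_add (Nat.mod_add_div' _ _).symm
  rw [hb, hκ', hr']
  set a := (k - 1) / κ with ha
  have hmod : (k - 1) % κ + κ * a = k - 1 := Nat.mod_add_div _ _
  set b := (k - 1) % κ with hbdef
  have hbκ : b < κ := Nat.mod_lt _ (by omega)
  -- G(κ-b) + b ≤ G(κ)
  have h1 : Griesmer q (κ - b) δ + b ≤ Griesmer q κ δ := by
    have := Griesmer_mono_aux (q := q) (d := δ) (by omega) hδ (m := κ - b) (n := κ) (by omega)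
    omega
  -- δ + (κ - 1) ≤ G(κ)
  have h2 : δ + (κ - 1) ≤ Griesmer q κ δ := by
    have := Griesmer_mono_aux (q := q) (d := δ) (by omega) hδ (m := 1) (n := κ) hκ
    rw [Griesmer_one] at this
    omega
  -- (k-1)/r ≤ a
  have h3 : (k - 1) / r ≤ a := Nat.div_le_div_left hκr (by omega)
  have hδ' : (0 : ℤ) ≤ (δ : ℤ) - 1 := by omega
  -- cast everything to ℤ
  have h1' : (Griesmer q (κ - b) δ : ℤ) + b ≤ Griesmer q κ δ := by exact_mod_cast h1
  have h2' : (δ : ℤ) + (κ - 1 : ℕ) ≤ Griesmer q κ δ := by exact_mod_cast h2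
  have h3' : ((k - 1) / r : ℕ) * ((δ : ℤ) - 1) ≤ (a : ℤ) * ((δ : ℤ) - 1) :=
    mul_le_mul_of_nonneg_right (by exact_mod_cast h3) hδ'
  have hmod' : (b : ℤ) + (κ : ℤ) * a = (k : ℤ) - 1 := by
    have : (b : ℤ) + (κ : ℤ) * a = ((k - 1 : ℕ) : ℤ) := by exact_mod_cast hmod
    rw [this]; omega
  have hcast : ((κ : ℤ) - 1) = ((κ - 1 : ℕ) : ℤ) := by omega
  have h4 : (a : ℤ) * ((δ : ℤ) + (κ : ℤ) - 1) ≤ (a : ℤ) * Griesmer q κ δ := by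
    apply mul_le_mul_of_nonneg_left _ (by positivity)
    calc (δ : ℤ) + (κ : ℤ) - 1 = (δ : ℤ) + ((κ : ℤ) - 1) := by ring
    _ = (δ : ℤ) + ((κ - 1 : ℕ) : ℤ) := by rw [hcast]
    _ ≤ _ := h2'
  push_cast
  nlinarith [h1', h4, h3', hmod']
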